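/- Let d ≥ 2 and let γ ∈ ℝ^{d×d} be symmetric with zero diagonal and with γ_{ij} > 0 for all i ≠ j. Then for every x in the interior Δ̊^d of the unit simplex, the (d−1)×(d−1) matrix c̃(x), obtained from c(x) by deleting the d-th row and column, is positive definite, and the matrix c(x) has rank d−1. -/

import Mathlib

open Matrix Finset

/-- if `γ_{ij} > 0` for all `i ≠ j`, then for every `x` in the interior of the
unit simplex the matrix `c̃(x)` (i.e. `c(x)` with the `d`-th row and column deleted) is
positive definite and `c(x)` has rank `d − 1`. -/
theorem statement7 (d : ℕ) (hd : 2 ≤ d)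
    (γ : Fin d → Fin d → ℝ)
    (hγsymm : ∀ i j, γ i j = γ j i) (hγdiag : ∀ i, γ i i = 0)
    (hγpos : ∀ i j, i ≠ j → 0 < γ i j)
    (c : (Fin d → ℝ) → Matrix (Fin d) (Fin d) ℝ)
    (hc : ∀ x i j, c x i j =
      if i = j then ∑ k ∈ Finset.univ.erase i, γ i k * x i * x k
      else -(γ i j * x i * x j))
    (x : Fin d → ℝ)
    (hx : (∀ i, 0 < x i ∧ x i < 1) ∧ (∑ i, x i) = 1) :
    ((c x).submatrix (Fin.castLE (Nat.sub_le d 1)) (Fin.castLE (Nat.sub_le d 1))).PosDef ∧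
      (c x).rank = d - 1 := by
  obtain ⟨hx1, hxsum⟩ := hx
  set w : Fin d → Fin d → ℝ := fun i j => γ i j * x i * x j with hwdef
  have hwsymm : ∀ i j, w i j = w j i := by
    intro i j; simp only [hwdef, hγsymm i j]; ring
  have hwnn : ∀ i j, 0 ≤ w i j := by
    intro i j
    rcases eq_or_ne i j with rfl | h
    · simp [hwdef, hγdiag]
    · have h1 := hγpos i j h
      have h2 := (hx1 i).1
      have h3 := (hx1 j).1
      positivity
  have hwpos : ∀ i j, i ≠ j → 0 < w i j := by
    intro i j h
    have h1 := hγpos i j h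
    have h2 := (hx1 i).1
    have h3 := (hx1 j).1
    positivity
  have hcw : ∀ i j, c x i j = (if i = j then ∑ k, w i k else 0) - w i j := by
    intro i j
    rw [hc]
    by_cases h : i = j
    · subst h
      rw [if_pos rfl, if_pos rfl, Finset.sum_erase_eq_sub (Finset.mem_univ i)]
    · simp [h, hwdef]
  -- quadratic form identity
  have key : ∀ v : Fin d → ℝ,
      v ⬝ᵥ (c x) *ᵥ v = (1/2) * ∑ i, ∑ j, w i j * (v i - v j)^2 := by
    intro v
    have h1 : v ⬝ᵥ (c x) *ᵥ v = ∑ i, ∑ j, v i * (c x i j * v j) := by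
      simp [dotProduct, mulVec, Finset.mul_sum]
    rw [h1]
    have lhs : ∑ i, ∑ j, v i * (c x i j * v j)
        = (∑ i, (∑ k, w i k) * (v i)^2) - ∑ i, ∑ j, w i j * (v i * v j) := by
      rw [← Finset.sum_sub_distrib]
      refine Finset.sum_congr rfl fun i _ => ?_
      have : ∀ j ∈ (univ : Finset (Fin d)), v i * (c x i j * v j)
          = (if i = j then (∑ k, w i k) * (v i)^2 else 0) - w i j * (v i * v j) := by
        intro j _
        rw [hcw]
        by_cases h : i = j
        · subst h; simp; ring
        · simp [h]; ring
      rw [Finset.sum_congr rfl this, Finset.sum_sub_distrib, Finset.sum_ite_eq]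
      simp
    have comm : ∑ i, ∑ j, w i j * (v j)^2 = ∑ i, ∑ j, w i j * (v i)^2 := by
      rw [Finset.sum_comm]
      refine Finset.sum_congr rfl fun i _ => Finset.sum_congr rfl fun j _ => ?_
      rw [hwsymm]
    have rhs : (1/2) * ∑ i, ∑ j, w i j * (v i - v j)^2
        = (∑ i, (∑ k, w i k) * (v i)^2) - ∑ i, ∑ j, w i j * (v i * v j) := by
      have expand : ∑ i, ∑ j, w i j * (v i - v j)^2
          = (∑ i, ∑ j, w i j * (v i)^2) + (∑ i, ∑ j, w i j * (v j)^2)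
            - 2 * ∑ i, ∑ j, w i j * (v i * v j) := by
        rw [Finset.mul_sum, ← Finset.sum_add_distrib, ← Finset.sum_sub_distrib]
        refine Finset.sum_congr rfl fun i _ => ?_
        rw [Finset.mul_sum, ← Finset.sum_add_distrib, ← Finset.sum_sub_distrib]
        refine Finset.sum_congr rfl fun j _ => ?_
        ring
      have pull : ∑ i, ∑ j, w i j * (v i)^2 = ∑ i, (∑ k, w i k) * (v i)^2 := by
        refine Finset.sum_congr rfl fun i _ => ?_
        rw [Finset.sum_mul]
      rw [expand, comm, pull]
      ring
    rw [lhs, rhs]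
  -- positive definiteness of the submatrix
  have hcsymm : ∀ i j, c x i j = c x j i := by
    intro i j
    rcases eq_or_ne i j with rfl | h
    · rfl
    · rw [hcw, hcw, if_neg h, if_neg (Ne.symm h), hwsymm]
  have hm1 : d - 1 < d := by omega
  set e : Fin (d-1) → Fin d := Fin.castLE (Nat.sub_le d 1) with hedef
  have heinj : Function.Injective e := Fin.castLE_injective _
  have posdef : ((c x).submatrix e e).PosDef := by
    rw [posDef_iff_dotProduct_mulVec]
    constructor
    · ext i j
      simp only [conjTranspose_apply, submatrix_apply, star_trivial]
      exact hcsymm (e j) (e i)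
    · intro v hv
      set vt : Fin d → ℝ := fun i => if h : (i : ℕ) < d - 1 then v ⟨i, h⟩ else 0 with hvt
      have hvte : ∀ j : Fin (d-1), vt (e j) = v j := by
        intro j
        have : ((e j : Fin d) : ℕ) < d - 1 := j.2
        simp only [hvt, dif_pos this]
        exact congrArg v (Fin.ext rfl)
      have hvt0 : ∀ i : Fin d, ¬ ((i:ℕ) < d - 1) → vt i = 0 := by
        intro i h; simp only [hvt, dif_neg h]
      -- the image finset
      set s : Finset (Fin d) := (univ : Finset (Fin (d-1))).image e with hsdef
      have hmem : ∀ i : Fin d, i ∈ s ↔ (i : ℕ) < d - 1 := by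
        intro i
        simp only [hsdef, Finset.mem_image, Finset.mem_univ, true_and]
        constructor
        · rintro ⟨j, rfl⟩; exact j.2
        · intro h; exact ⟨⟨i, h⟩, rfl⟩
      have hquad : star v ⬝ᵥ ((c x).submatrix e e) *ᵥ v = vt ⬝ᵥ (c x) *ᵥ vt := by
        simp only [star_trivial, dotProduct, mulVec, submatrix_apply]
        rw [← Finset.sum_subset (Finset.subset_univ s)
          (by intro i _ hi; rw [hvt0 i (by rwa [hmem] at hi)]; ring)]
        rw [Finset.sum_image (fun a _ b _ h => heinj h)]
        refine Finset.sum_congr rfl fun i _ => ?_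
        rw [hvte]
        congr 1
        rw [← Finset.sum_subset (Finset.subset_univ s)
          (by intro j _ hj; rw [hvt0 j (by rwa [hmem] at hj)]; ring)]
        rw [Finset.sum_image (fun a _ b _ h => heinj h)]
        refine Finset.sum_congr rfl fun j _ => by rw [hvte]
      rw [hquad, key]
      -- find a nonzero coordinate
      obtain ⟨i₀, hi₀⟩ : ∃ i, v i ≠ 0 := Function.ne_iff.mp hv
      set last : Fin d := ⟨d - 1, hm1⟩ with hlast
      have hne : e i₀ ≠ last := by
        intro h
        have : ((e i₀ : Fin d) : ℕ) = d - 1 := by rw [h]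
        exact absurd this (Nat.ne_of_lt i₀.2)
      have hterm : 0 < w (e i₀) last * (vt (e i₀) - vt last)^2 := by
        have h1 : vt last = 0 := hvt0 last (by simp [hlast])
        have h2 : vt (e i₀) = v i₀ := hvte i₀
        rw [h1, h2, sub_zero]
        exact mul_pos (hwpos _ _ hne) (by positivity)
      have hterm' : 0 < w (e i₀) last * (vt (e i₀) - vt last)^2 := hterm
      have inner_pos : 0 < ∑ j, w (e i₀) j * (vt (e i₀) - vt j)^2 := by
        refine Finset.sum_pos' (fun j _ => mul_nonneg (hwnn _ _) (sq_nonneg _)) ⟨last, Finset.mem_univ _, hterm'⟩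
      have outer_pos : 0 < ∑ i, ∑ j, w i j * (vt i - vt j)^2 := by
        refine Finset.sum_pos' (fun i _ => Finset.sum_nonneg fun j _ => mul_nonneg (hwnn _ _) (sq_nonneg _)) ⟨e i₀, Finset.mem_univ _, inner_pos⟩
      linarith
  refine ⟨posdef, ?_⟩
  -- rank
  have hone : (fun _ => (1:ℝ) : Fin d → ℝ) ≠ 0 := by
    intro h
    have := congrFun h ⟨0, by omega⟩
    simp at this
  have hker : LinearMap.ker ((c x).mulVecLin) = Submodule.span ℝ {(fun _ => (1:ℝ) : Fin d → ℝ)} := by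
    apply le_antisymm
    · intro v hv
      rw [LinearMap.mem_ker, Matrix.mulVecLin_apply] at hv
      have h0 : v ⬝ᵥ (c x) *ᵥ v = 0 := by rw [hv]; simp [dotProduct]
      rw [key] at h0
      have hsum0 : ∑ i, ∑ j, w i j * (v i - v j)^2 = 0 := by linarith
      have hterm : ∀ i j, w i j * (v i - v j)^2 = 0 := by
        intro i j
        have h1 := (Finset.sum_eq_zero_iff_of_nonneg
          (fun i _ => Finset.sum_nonneg fun j _ => mul_nonneg (hwnn _ _) (sq_nonneg _))).mp hsum0 i (Finset.mem_univ _)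
        exact (Finset.sum_eq_zero_iff_of_nonneg
          (fun j _ => mul_nonneg (hwnn _ _) (sq_nonneg _))).mp h1 j (Finset.mem_univ _)
      set i₀ : Fin d := ⟨0, by omega⟩ with hi0
      have hconst : ∀ i, v i = v i₀ := by
        intro i
        rcases eq_or_ne i i₀ with rfl | h
        · rfl
        · have h1 := hterm i i₀
          have h2 : (v i - v i₀)^2 = 0 := by
            rcases mul_eq_zero.mp h1 with h' | h'
            · exact absurd h' (hwpos i i₀ h).ne'
            · exact h'
          have := pow_eq_zero_iff (n := 2) (by norm_num) |>.mp h2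
          linarith [sub_eq_zero.mp this]
      have : v = v i₀ • (fun _ => (1:ℝ)) := by
        funext i; simp [hconst i]
      rw [this]
      exact Submodule.smul_mem _ _ (Submodule.mem_span_singleton_self _)
    · rw [Submodule.span_le, Set.singleton_subset_iff]
      rw [SetLike.mem_coe, LinearMap.mem_ker, Matrix.mulVecLin_apply]
      funext i
      simp only [mulVec, dotProduct, mul_one, Pi.zero_apply]
      have : ∀ j ∈ (univ : Finset (Fin d)), c x i j = (if i = j then ∑ k, w i k else 0) - w i j := by
        intro j _; rw [hcw]
      rw [Finset.sum_congr rfl this, Finset.sum_sub_distrib, Finset.sum_ite_eq]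
      simp
  have hkerdim : Module.finrank ℝ (LinearMap.ker (c x).mulVecLin) = 1 := by
    rw [hker]
    exact finrank_span_singleton hone
  have hrn := LinearMap.finrank_range_add_finrank_ker ((c x).mulVecLin)
  rw [hkerdim, Module.finrank_fin_fun] at hrn
  have : (c x).rank = Module.finrank ℝ (LinearMap.range (c x).mulVecLin) := rfl
  omega
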